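/- Let p be an odd prime. Let ρ be the permutation of ℤ/p given by ρ(x) = x + 1, and let κ be a permutation of ℤ/p with κ∘κ = id and κ(0) = 0. If the subgroup ⟨ρ, κ⟩ of the symmetric group on ℤ/p admits an injective group homomorphism into AGL₁(p), the group of affine permutations x ↦ a·x + b of ℤ/p (a ∈ (ℤ/p)ˣ, b ∈ ℤ/p), then either κ is the identity or κ(x) = −x for all x ∈ ℤ/p. -/

import Mathlib

section Aux
variable {p : ℕ} [Fact p.Prime]

private def aslope (g : ZMod p ≃ᵃ[ZMod p] ZMod p) : ZMod p := g 1 - g 0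

private lemma affine_apply (g : ZMod p ≃ᵃ[ZMod p] ZMod p) (x : ZMod p) :
    g x = aslope g * x + g 0 := by
  have h1 : ∀ v y : ZMod p, g (v + y) = g.linear v + g y := by
    intro v y; simpa [add_comm] using g.toAffineMap.map_vadd y v
  have h2 : g x = g.linear x + g 0 := by simpa using h1 x 0
  have h3 : g.linear x = x * g.linear 1 := by
    have := g.linear.map_smul x 1
    simpa [smul_eq_mul] using this
  have h4 : g.linear 1 = g 1 - g 0 := by
    have := h1 1 0
    simp only [add_zero] at this
    rw [this]; ring
  rw [h2, h3, h4, aslope]; ring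

private lemma aslope_mul (g h : ZMod p ≃ᵃ[ZMod p] ZMod p) :
    aslope (g * h) = aslope g * aslope h := by
  have e : ∀ x, (g * h) x = g (h x) := fun _ => rfl
  unfold aslope
  rw [e, e, affine_apply g (h 1), affine_apply g (h 0)]
  unfold aslope; ring

private lemma aslope_pow (g : ZMod p ≃ᵃ[ZMod p] ZMod p) (n : ℕ) :
    aslope (g ^ n) = aslope g ^ n := by
  induction n with
  | zero => simp [aslope]
  | succ n ih => rw [pow_succ, pow_succ, aslope_mul, ih]

private lemma translation_of_pow_card (g : ZMod p ≃ᵃ[ZMod p] ZMod p)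
    (hg : g ^ p = 1) (x : ZMod p) : g x = x + g 0 := by
  have h1 : aslope g ^ p = 1 := by
    rw [← aslope_pow, hg]; simp [aslope]
  have h2 : aslope g = 1 := by rw [← ZMod.pow_card (aslope g), h1]
  rw [affine_apply g x, h2, one_mul]

private lemma translation_pow (g : ZMod p ≃ᵃ[ZMod p] ZMod p)
    (hg : g ^ p = 1) (n : ℕ) (x : ZMod p) : (g ^ n) x = x + n * g 0 := by
  induction n with
  | zero => simp
  | succ n ih =>
    have e : (g ^ (n+1)) x = g ((g ^ n) x) := by
      rw [pow_succ']; rfl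
    rw [e, ih, translation_of_pow_card g hg]
    push_cast; ring

private lemma rho_pow (n : ℕ) (x : ZMod p) :
    ((Equiv.addRight (1 : ZMod p)) ^ n) x = x + n := by
  induction n with
  | zero => simp
  | succ n ih =>
    rw [pow_succ', Equiv.Perm.mul_apply, ih]
    push_cast; simp [add_assoc, add_comm]

end Aux

theorem involution_in_AGL1
    (p : ℕ) [hp : Fact p.Prime] (hodd : Odd p)
    (κ : Equiv.Perm (ZMod p)) (hκ2 : κ * κ = 1) (hκ0 : κ 0 = 0)
    (hembed : ∃ f : (Subgroup.closure ({Equiv.addRight (1 : ZMod p), κ} :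
          Set (Equiv.Perm (ZMod p)))) →* (ZMod p ≃ᵃ[ZMod p] ZMod p),
        Function.Injective f) :
    κ = 1 ∨ ∀ x : ZMod p, κ x = -x := by
  obtain ⟨f, hf⟩ := hembed
  have hρmem : Equiv.addRight (1 : ZMod p) ∈ Subgroup.closure
      ({Equiv.addRight (1 : ZMod p), κ} : Set (Equiv.Perm (ZMod p))) :=
    Subgroup.subset_closure (by simp)
  have hκmem : κ ∈ Subgroup.closure
      ({Equiv.addRight (1 : ZMod p), κ} : Set (Equiv.Perm (ZMod p))) :=
    Subgroup.subset_closure (by simp)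
  set R := (⟨Equiv.addRight (1 : ZMod p), hρmem⟩ :
    Subgroup.closure ({Equiv.addRight (1 : ZMod p), κ} : Set (Equiv.Perm (ZMod p)))) with hR
  set K := (⟨κ, hκmem⟩ :
    Subgroup.closure ({Equiv.addRight (1 : ZMod p), κ} : Set (Equiv.Perm (ZMod p)))) with hK
  have hρp : (Equiv.addRight (1 : ZMod p)) ^ p = 1 := by
    ext x
    rw [rho_pow]
    simp [ZMod.natCast_self]
  have hRp : R ^ p = 1 := by
    apply Subtype.ext
    simpa [hR] using hρp
  have hfRp : (f R) ^ p = 1 := by rw [← map_pow, hRp, map_one]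
  have hCp : (f (K * R * K⁻¹)) ^ p = 1 := by
    rw [← map_pow, conj_pow, hRp, mul_one, mul_inv_cancel, map_one]
  set t : ZMod p := f R 0 with ht
  set c : ZMod p := f (K * R * K⁻¹) 0 with hc
  have htrans : ∀ x, f R x = x + t := translation_of_pow_card _ hfRp
  have hctrans : ∀ x, f (K * R * K⁻¹) x = x + c := translation_of_pow_card _ hCp
  have htne : t ≠ 0 := by
    intro h0
    have hfR1 : f R = 1 := by
      apply AffineEquiv.toEquiv_injective
      ext x
      have := htrans x
      rw [h0, add_zero] at this
      exact this
    have hR1 : R = 1 := hf (by rw [hfR1, map_one])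
    have h01 : (1 : ZMod p) = 0 := by
      have := congrArg (fun σ : Equiv.Perm (ZMod p) => σ 0) (congrArg Subtype.val hR1)
      simpa [hR] using this
    exact one_ne_zero h01
  set k : ℕ := (c * t⁻¹).val with hk
  have hkt : (k : ZMod p) * t = c := by
    rw [hk, ZMod.natCast_val, ZMod.cast_id]
    field_simp
  have hfeq : f (R ^ k) = f (K * R * K⁻¹) := by
    apply AffineEquiv.toEquiv_injective
    ext x
    rw [map_pow]
    show ((f R) ^ k) x = f (K * R * K⁻¹) x
    rw [translation_pow _ hfRp, hctrans, hkt]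
  have heq : R ^ k = K * R * K⁻¹ := hf hfeq
  have hκinv : κ⁻¹ = κ := by
    rw [inv_eq_iff_mul_eq_one, hκ2]
  have hperm : (Equiv.addRight (1 : ZMod p)) ^ k = κ * Equiv.addRight (1 : ZMod p) * κ⁻¹ := by
    have := congrArg Subtype.val heq
    simpa [hR, hK] using this
  set m : ZMod p := (k : ZMod p) with hm
  have h2 : ∀ y : ZMod p, κ (κ y) = y := by
    intro y
    have := congrArg (fun σ : Equiv.Perm (ZMod p) => σ y) hκ2
    simpa using this
  have key : ∀ x : ZMod p, κ (x + 1) = κ x + m := by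
    intro x
    have h1 := congrArg (fun σ : Equiv.Perm (ZMod p) => σ (κ x)) hperm
    simp only [Equiv.Perm.mul_apply, hκinv, Equiv.coe_addRight] at h1
    rw [rho_pow, h2 x] at h1
    rw [← h1, hm]
  have hlin : ∀ x : ZMod p, κ x = m * x := by
    have hn : ∀ n : ℕ, κ (n : ZMod p) = m * n := by
      intro n
      induction n with
      | zero => simpa using hκ0
      | succ n ih =>
        push_cast
        rw [key, ih]; ring
    intro x
    have hx : ((x.val : ℕ) : ZMod p) = x := by
      rw [ZMod.natCast_val, ZMod.cast_id]
    rw [← hx, hn]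
  have hm2 : m * m = 1 := by
    have h3 := h2 (1 : ZMod p)
    rw [hlin, hlin] at h3
    calc m * m = m * (m * 1) := by ring
    _ = 1 := h3
  rcases mul_self_eq_one_iff.mp hm2 with h1 | h1
  · left
    ext x
    rw [hlin, h1, one_mul]; rfl
  · right
    intro x
    rw [hlin, h1]; ring
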